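/- Let G be a graph with m ≥ 1 edges, adjacency matrix A, degree matrix D, and signless Laplacian Q = D + A with minimum eigenvalue δ_n. If G admits a quantum c-coloring (in some dimension d), then c ≥ 1 + 2m/(2m − n·δ_n). In particular, χ_q(G) ≥ 1 + 2m/(2m − n·δ_n). -/

import Mathlib

open Matrix BigOperators

/-- A quantum `c`-coloring of `G` in dimension `d`. -/
def IsQuantumColoring {n d c : ℕ} (G : SimpleGraph (Fin n))
    (P : Fin n → Fin c → Matrix (Fin d) (Fin d) ℂ) : Prop :=
  (∀ v k, (P v k).IsHermitian) ∧
  (∀ v k, P v k * P v k = P v k) ∧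
  (∀ v, ∑ k, P v k = 1) ∧
  (∀ v w, G.Adj v w → ∀ k, P v k * P w k = 0)

lemma re_trace_conjTranspose_mul_self_nonneg {d : ℕ} (Y : Matrix (Fin d) (Fin d) ℂ) :
    0 ≤ ((Yᴴ * Y).trace).re := by
  have h : (Yᴴ * Y).trace = ∑ i, ∑ j, (starRingEnd ℂ) (Y j i) * Y j i := by
    simp [Matrix.trace, Matrix.diag, Matrix.mul_apply, Matrix.conjTranspose_apply]
  rw [h, Complex.re_sum]
  refine Finset.sum_nonneg fun i _ => ?_
  rw [Complex.re_sum]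
  refine Finset.sum_nonneg fun j _ => ?_
  rw [← Complex.normSq_eq_conj_mul_self, Complex.ofReal_re]
  exact Complex.normSq_nonneg _

open scoped MatrixOrder Matrix.Norms.L2Operator in
lemma trace_psd_mul_nonneg {n : ℕ} {A M : Matrix (Fin n) (Fin n) ℝ}
    (hA : A.PosSemidef) (hM : M.PosSemidef) : 0 ≤ (A * M).trace := by
  obtain ⟨B, rfl⟩ := CStarAlgebra.nonneg_iff_eq_star_mul_self.mp hA.nonneg
  rw [Matrix.mul_assoc, Matrix.trace_mul_comm, Matrix.trace]
  refine Finset.sum_nonneg fun i _ => ?_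
  have h := hM.dotProduct_mulVec_nonneg (fun j => B i j)
  simp only [star_trivial, dotProduct, Matrix.mulVec] at h
  simp only [Matrix.diag_apply, Matrix.mul_apply, Matrix.conjTranspose_apply, Matrix.star_apply, star_trivial]
  convert h using 1
  simp only [Finset.sum_mul, Finset.mul_sum]
  rw [Finset.sum_comm]
  refine Finset.sum_congr rfl fun j _ => Finset.sum_congr rfl fun k _ => by ring

/-- The Lima et al. bound for the quantum chromatic number:
`c ≥ 1 + 2m/(2m − n·δ_n)` where `δ_n` is the least eigenvalue of the signless
Laplacian `Q = D + A`. -/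
theorem lima_bound_quantum {n d c : ℕ} (hd : 0 < d) (G : SimpleGraph (Fin n))
    [DecidableRel G.Adj]
    (hm : 1 ≤ G.edgeFinset.card)
    (hQ : (Matrix.diagonal (fun v => (G.degree v : ℝ)) + G.adjMatrix ℝ).IsHermitian)
    (P : Fin n → Fin c → Matrix (Fin d) (Fin d) ℂ)
    (hP : IsQuantumColoring G P) :
    1 + 2 * (G.edgeFinset.card : ℝ) /
        (2 * (G.edgeFinset.card : ℝ) - (n : ℝ) * ⨅ i, hQ.eigenvalues i)
      ≤ (c : ℝ) := by
  classical
  obtain ⟨hHerm, hIdem, hSum, hOrth⟩ := hP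
  -- extract an edge
  obtain ⟨e, he⟩ := Finset.card_pos.mp (lt_of_lt_of_le one_pos hm)
  rw [SimpleGraph.mem_edgeFinset] at he
  obtain ⟨⟨u₀, v₀⟩, rfl⟩ := Quot.exists_rep e
  have hadj₀ : G.Adj u₀ v₀ := he
  have i0 : Fin d := ⟨0, hd⟩
  -- c ≥ 2
  have hc2 : 2 ≤ c := by
    by_contra hcon
    push_neg at hcon
    interval_cases c
    · have h0 : (0 : Matrix (Fin d) (Fin d) ℂ) = 1 := by
        have := hSum u₀; simpa using this
      have h1 : (0 : ℂ) = 1 := by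
        have := congrFun (congrFun h0 i0) i0
        simpa [Matrix.one_apply_eq] using this
      exact zero_ne_one h1
    · have h1 : P u₀ 0 = 1 := by simpa using hSum u₀
      have h2 : P v₀ 0 = 1 := by simpa using hSum v₀
      have h3 := hOrth u₀ v₀ hadj₀ 0
      rw [h1, h2, one_mul] at h3
      have h4 : (1 : ℂ) = 0 := by
        have h5 := congrFun (congrFun h3 i0) i0
        rw [show ((1 : Matrix (Fin d) (Fin d) ℂ) i0 i0) = 1 from Matrix.one_apply_eq i0] at h5
        exact h5
      exact one_ne_zero h4
  -- the matrices X v k = c • P v k - 1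
  set X : Fin n → Fin c → Matrix (Fin d) (Fin d) ℂ :=
    fun v k => (c : ℂ) • P v k - 1 with hXdef
  have hXherm : ∀ v k, (X v k)ᴴ = X v k := by
    intro v k
    simp [hXdef, conjTranspose_smul, (hHerm v k).eq, Complex.star_def]
  have hSumTr : ∀ v, ∑ k, (P v k).trace = (d : ℂ) := by
    intro v
    rw [← Matrix.trace_sum, hSum v, Matrix.trace_one]
    simp
  have hXX : ∀ v, ∑ k, (X v k * X v k).trace = (d:ℂ) * c * (c - 1) := by
    intro v
    have h1 : ∀ k, (X v k * X v k).trace = ((c:ℂ)^2 - 2*c) * (P v k).trace + d := by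
      intro k
      have h2 : X v k * X v k = ((c:ℂ)^2 - 2*(c:ℂ)) • P v k + 1 := by
        simp only [hXdef]
        simp only [sub_mul, mul_sub, smul_mul_assoc, mul_smul_comm, one_mul, mul_one,
          hIdem v k, smul_smul]
        module
      rw [h2, Matrix.trace_add, Matrix.trace_smul, Matrix.trace_one, smul_eq_mul]
      simp
    rw [Finset.sum_congr rfl fun k _ => h1 k, Finset.sum_add_distrib, ← Finset.mul_sum, hSumTr v]
    simp
    ring
  have hXadd : ∀ u v, G.Adj u v → ∑ k, ((X u k + X v k) * (X u k + X v k)).trace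
      = 2 * (d:ℂ) * c * (c - 2) := by
    intro u v huv
    have h1 : ∀ k, ((X u k + X v k) * (X u k + X v k)).trace
        = ((c:ℂ)^2 - 4*c) * ((P u k).trace + (P v k).trace) + 4*d := by
      intro k
      have h2 : (X u k + X v k) * (X u k + X v k)
          = ((c:ℂ)^2 - 4*(c:ℂ)) • (P u k + P v k) + (4:ℂ) • 1 := by
        simp only [hXdef]
        simp only [add_mul, mul_add, sub_mul, mul_sub, smul_mul_assoc, mul_smul_comm, one_mul,
          mul_one, hIdem u k, hIdem v k, hOrth u v huv k, hOrth v u (G.adj_symm huv) k, smul_smul,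
          smul_zero]
        module
      rw [h2, Matrix.trace_add, Matrix.trace_smul, Matrix.trace_smul, Matrix.trace_add,
        Matrix.trace_one, smul_eq_mul, smul_eq_mul]
      simp
    rw [Finset.sum_congr rfl fun k _ => h1 k, Finset.sum_add_distrib, ← Finset.mul_sum,
      Finset.sum_add_distrib, hSumTr u, hSumTr v]
    simp
    ring
  set N : Fin c → Matrix (Fin n) (Fin n) ℝ :=
    fun k => Matrix.of fun u v => ((X u k * X v k).trace).re with hNdef
  have hNsymm : ∀ k u v, N k u v = N k v u := by
    intro k u v
    simp only [hNdef, Matrix.of_apply]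
    rw [Matrix.trace_mul_comm]
  have hNpsd : ∀ k, (N k).PosSemidef := by
    intro k
    refine Matrix.PosSemidef.of_dotProduct_mulVec_nonneg ?_ ?_
    · ext u v
      simp only [Matrix.conjTranspose_apply, star_trivial]
      exact hNsymm k v u
    · intro x
      have hYh : (∑ v, (x v : ℂ) • X v k)ᴴ = ∑ v, (x v : ℂ) • X v k := by
        rw [Matrix.conjTranspose_sum]
        refine Finset.sum_congr rfl fun v _ => ?_
        rw [Matrix.conjTranspose_smul, hXherm]
        simp [Complex.star_def, Complex.conj_ofReal]
      have key : dotProduct (star x) ((N k) *ᵥ x)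
          = (((∑ v, (x v : ℂ) • X v k)ᴴ * (∑ v, (x v : ℂ) • X v k)).trace).re := by
        rw [hYh]
        rw [Finset.sum_mul_sum, Matrix.trace_sum, Complex.re_sum]
        simp only [Matrix.trace_sum, Complex.re_sum, smul_mul_assoc, mul_smul_comm,
          Matrix.trace_smul, smul_eq_mul, Complex.re_ofReal_mul]
        simp only [dotProduct, Matrix.mulVec, star_trivial, hNdef, Matrix.of_apply,
          Finset.mul_sum]
        refine Finset.sum_congr rfl fun u _ => Finset.sum_congr rfl fun v _ => ?_
        ring
      rw [key]
      exact re_trace_conjTranspose_mul_self_nonneg _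
  set Q : Matrix (Fin n) (Fin n) ℝ :=
    Matrix.diagonal (fun v => (G.degree v : ℝ)) + G.adjMatrix ℝ with hQdef
  set δ : ℝ := ⨅ i, hQ.eigenvalues i with hδdef
  have hδle : ∀ i, δ ≤ hQ.eigenvalues i := fun i =>
    ciInf_le (Set.Finite.bddBelow (Set.finite_range _)) i
  have hQpsd : (Q - δ • 1).PosSemidef := by
    have hspec := hQ.spectral_theorem
    rw [Unitary.conjStarAlgAut_apply] at hspec
    set U : Matrix (Fin n) (Fin n) ℝ := (hQ.eigenvectorUnitary : Matrix (Fin n) (Fin n) ℝ) with hU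
    have hUU : U * star U = 1 := (Matrix.mem_unitaryGroup_iff).mp hQ.eigenvectorUnitary.2
    have h1 : Q - δ • 1 = U * (Matrix.diagonal (fun i => hQ.eigenvalues i - δ)) * Uᴴ := by
      have hd1 : Matrix.diagonal (fun i => hQ.eigenvalues i - δ)
          = Matrix.diagonal (RCLike.ofReal ∘ hQ.eigenvalues) - δ • 1 := by
        rw [Matrix.smul_one_eq_diagonal, ← Matrix.diagonal_sub]
        congr 1
      rw [hd1, Matrix.mul_sub, Matrix.sub_mul]
      rw [← Matrix.star_eq_conjTranspose, ← hspec]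
      congr 1
      rw [Matrix.mul_smul, Matrix.smul_mul, Matrix.mul_one, hUU]
    rw [h1]
    exact (Matrix.posSemidef_diagonal_iff.mpr fun i =>
      sub_nonneg.mpr (hδle i)).mul_mul_conjTranspose_same U
  have htr : ∀ k, δ * (N k).trace ≤ (Q * N k).trace := by
    intro k
    have h0 := trace_psd_mul_nonneg hQpsd (hNpsd k)
    rw [Matrix.sub_mul, Matrix.trace_sub, smul_mul_assoc, Matrix.one_mul,
      Matrix.trace_smul, smul_eq_mul] at h0
    linarith
  have hsum1 : ∑ k, (N k).trace = (n : ℝ) * ((d:ℝ) * c * (c - 1)) := by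
    have h1 : ∀ k, (N k).trace = ∑ v, ((X v k * X v k).trace).re := by
      intro k; simp [Matrix.trace, Matrix.diag, hNdef]
    rw [Finset.sum_congr rfl fun k _ => h1 k, Finset.sum_comm]
    have h2 : ∀ v, ∑ k, ((X v k * X v k).trace).re = (d:ℝ) * c * (c-1) := by
      intro v
      rw [← Complex.re_sum, hXX v]
      have h3 : ((d:ℂ) * c * (c - 1)) = (((d:ℝ) * c * (c-1) : ℝ) : ℂ) := by push_cast; ring
      rw [h3, Complex.ofReal_re]
    rw [Finset.sum_congr rfl fun v _ => h2 v]
    simp [Finset.sum_const, Finset.card_univ]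
  have hdeg : ∀ u : Fin n, (G.degree u : ℝ) = ∑ v, if G.Adj u v then (1:ℝ) else 0 := by
    intro u
    have h1 : G.degree u = ∑ v, if G.Adj u v then 1 else 0 := by
      rw [← SimpleGraph.card_neighborFinset_eq_degree, SimpleGraph.neighborFinset_eq_filter,
        Finset.card_filter]
    rw [h1]
    push_cast [apply_ite (Nat.cast : ℕ → ℝ)]
    rfl
  have hswap : ∀ f : Fin n → Fin n → ℝ,
      (∑ u, ∑ v, if G.Adj u v then f u v else 0)
        = ∑ u, ∑ v, if G.Adj u v then f v u else 0 := by
    intro f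
    rw [Finset.sum_comm]
    exact Finset.sum_congr rfl fun u _ => Finset.sum_congr rfl fun v _ =>
      if_congr (G.adj_comm _ _) rfl rfl
  have htrQ : ∀ k, (Q * N k).trace
      = (∑ u, ∑ v, if G.Adj u v then N k u u else 0)
        + (∑ u, ∑ v, if G.Adj u v then N k v u else 0) := by
    intro k
    rw [Matrix.trace]
    simp only [Matrix.diag_apply]
    have h1 : ∀ u, (Q * N k) u u
        = (G.degree u : ℝ) * N k u u + ∑ v, if G.Adj u v then N k v u else 0 := by
      intro u
      rw [Matrix.mul_apply]
      simp only [hQdef, Matrix.add_apply, Matrix.diagonal_apply, SimpleGraph.adjMatrix_apply,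
        add_mul]
      rw [Finset.sum_add_distrib]
      congr 1
      · simp [ite_mul]
      · exact Finset.sum_congr rfl fun v _ => by simp [ite_mul]
    rw [Finset.sum_congr rfl fun u _ => h1 u, Finset.sum_add_distrib]
    congr 1
    refine Finset.sum_congr rfl fun u _ => ?_
    rw [hdeg u, Finset.sum_mul]
    exact Finset.sum_congr rfl fun v _ => by simp [ite_mul]
  have h2tr : ∀ k, 2 * (Q * N k).trace
      = ∑ u, ∑ v, if G.Adj u v then (((X u k + X v k) * (X u k + X v k)).trace).re else 0 := by
    intro k
    rw [htrQ k]
    have e1 := hswap (fun u v => N k u u)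
    have e2 := hswap (fun u v => N k v u)
    have hpt : ∀ u v : Fin n, N k u u + N k v v + (N k u v + N k v u)
        = (((X u k + X v k) * (X u k + X v k)).trace).re := by
      intro u v
      have hx : (X u k + X v k) * (X u k + X v k)
          = X u k * X u k + X u k * X v k + (X v k * X u k + X v k * X v k) := by
        rw [add_mul, mul_add, mul_add]
      rw [hx]
      simp only [Matrix.trace_add, Complex.add_re, hNdef, Matrix.of_apply]
      ring
    have hcomb : 2 * ((∑ u, ∑ v, if G.Adj u v then N k u u else 0)
        + (∑ u, ∑ v, if G.Adj u v then N k v u else 0))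
        = ((∑ u, ∑ v, if G.Adj u v then N k u u else 0)
          + (∑ u, ∑ v, if G.Adj u v then N k v v else 0))
        + ((∑ u, ∑ v, if G.Adj u v then N k u v else 0)
          + (∑ u, ∑ v, if G.Adj u v then N k v u else 0)) := by
      have e1' : (∑ u, ∑ v, if G.Adj u v then N k u u else 0)
          = ∑ u, ∑ v, if G.Adj u v then N k v v else 0 := e1
      have e2' : (∑ u, ∑ v, if G.Adj u v then N k v u else 0)
          = ∑ u, ∑ v, if G.Adj u v then N k u v else 0 := e2
      linarith
    rw [hcomb]
    simp only [← Finset.sum_add_distrib]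
    refine Finset.sum_congr rfl fun u _ => Finset.sum_congr rfl fun v _ => ?_
    by_cases h : G.Adj u v
    · simp only [if_pos h]
      linear_combination hpt u v
    · simp [h]
  have hsum2 : ∑ k, (Q * N k).trace = (G.edgeFinset.card : ℝ) * (2 * (d:ℝ) * c * (c - 2)) := by
    have h2 : 2 * ∑ k, (Q * N k).trace = ∑ k, 2 * (Q * N k).trace := Finset.mul_sum _ _ _
    have h3 : ∑ k, 2 * (Q * N k).trace
        = ∑ u, ∑ v, if G.Adj u v then (2 * (d:ℝ) * c * (c-2)) else 0 := by
      rw [Finset.sum_congr rfl fun k _ => h2tr k, Finset.sum_comm]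
      refine Finset.sum_congr rfl fun u _ => ?_
      rw [Finset.sum_comm]
      refine Finset.sum_congr rfl fun v _ => ?_
      by_cases h : G.Adj u v
      · simp only [if_pos h]
        rw [← Complex.re_sum, hXadd u v h]
        have h5 : (2 * (d:ℂ) * c * (c - 2)) = ((2 * (d:ℝ) * c * (c-2) : ℝ) : ℂ) := by
          push_cast; ring
        rw [h5, Complex.ofReal_re]
      · simp [h]
    have h4 : (∑ u, ∑ v, if G.Adj u v then (2*(d:ℝ)*c*(c-2)) else 0)
        = (2*(G.edgeFinset.card:ℝ)) * (2*(d:ℝ)*c*(c-2)) := by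
      have h6 : ∀ u v : Fin n, (if G.Adj u v then (2*(d:ℝ)*c*(c-2)) else 0)
          = (if G.Adj u v then (1:ℝ) else 0) * (2*(d:ℝ)*c*(c-2)) := by
        intro u v; split <;> simp
      simp only [h6, ← Finset.sum_mul]
      congr 1
      rw [Finset.sum_congr rfl fun u _ => (hdeg u).symm, ← Nat.cast_sum,
        SimpleGraph.sum_degrees_eq_twice_card_edges]
      push_cast; ring
    rw [h3, h4] at h2
    linarith
  -- the key spectral inequality
  have hkey : δ * ((n:ℝ) * ((d:ℝ) * c * (c-1)))
      ≤ (G.edgeFinset.card : ℝ) * (2 * (d:ℝ) * c * (c - 2)) := by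
    have h0 : ∑ k, δ * (N k).trace ≤ ∑ k, (Q * N k).trace :=
      Finset.sum_le_sum fun k _ => htr k
    rw [← Finset.mul_sum, hsum1, hsum2] at h0
    exact h0
  -- final arithmetic
  set m' : ℝ := (G.edgeFinset.card : ℝ) with hm'
  have hmR : (1:ℝ) ≤ m' := by rw [hm']; exact_mod_cast hm
  have hcR : (2:ℝ) ≤ (c:ℝ) := by exact_mod_cast hc2
  have hdR : (0:ℝ) < (d:ℝ) := by exact_mod_cast hd
  have hcpos : (0:ℝ) < (c:ℝ) := by linarith
  have key2 : δ * (n:ℝ) * ((c:ℝ)^2 - c) ≤ m' * (2*(c:ℝ)^2 - 4*c) := by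
    have hdc : (0:ℝ) < (d:ℝ) * c := by positivity
    have h7 : ((d:ℝ) * c) * (δ * (n:ℝ) * ((c:ℝ)^2 - c))
        ≤ ((d:ℝ) * c) * (m' * (2*(c:ℝ)^2 - 4*c)) := by
      calc ((d:ℝ) * c) * (δ * (n:ℝ) * ((c:ℝ)^2 - c))
          = δ * ((n:ℝ) * ((d:ℝ) * c * (c-1))) * c := by ring
        _ ≤ m' * (2 * (d:ℝ) * c * (c - 2)) * c := by
            apply mul_le_mul_of_nonneg_right hkey (by linarith)
        _ = ((d:ℝ) * c) * (m' * (2*(c:ℝ)^2 - 4*c)) := by ring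
    exact le_of_mul_le_mul_left h7 hdc
  have key3 : δ * (n:ℝ) * ((c:ℝ) - 1) ≤ m' * (2*(c:ℝ) - 4) := by
    have h8 : (c:ℝ) * (δ * (n:ℝ) * ((c:ℝ)-1)) ≤ (c:ℝ) * (m' * (2*(c:ℝ)-4)) := by
      calc (c:ℝ) * (δ * (n:ℝ) * ((c:ℝ)-1)) = δ * (n:ℝ) * ((c:ℝ)^2 - c) := by ring
        _ ≤ m' * (2*(c:ℝ)^2 - 4*c) := key2
        _ = (c:ℝ) * (m' * (2*(c:ℝ)-4)) := by ring
    exact le_of_mul_le_mul_left h8 hcpos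
  have hden : 0 < 2 * m' - (n:ℝ) * δ := by
    by_contra hcon
    push_neg at hcon
    nlinarith [key3, hmR, hcR]
  have hfin : 2 * m' / (2 * m' - (n:ℝ) * δ) ≤ (c:ℝ) - 1 := by
    rw [div_le_iff₀ hden]
    nlinarith [key3]
  linarith
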